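/- Let V be a finite-dimensional real vector space. The linear map Φ : C̃_1(V) → (trilinear maps V³ → V) defined by Φ(Γ)(x, y, z) := Γ(y, z, x) − Γ(x, z, y) takes values in the space R(V) of curvature-like tensors (i.e., Φ(Γ) is antisymmetric in its first two arguments and satisfies the Bianchi identity), and it is a linear isomorphism from C̃_1(V) onto R(V), whose inverse is given by R ↦ Γ with Γ(x, y, z) := (1/3)(R(z, x, y) + R(z, y, x)). -/

import Mathlib

variable (V : Type*) [AddCommGroup V] [Module ℝ V]

/-- `C̃_1(V)`: trilinear maps `Γ : V³ → V` symmetric in their first two arguments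
whose total symmetrization over `S_3` vanishes. -/
def CTildeOne : Submodule ℝ (V →ₗ[ℝ] V →ₗ[ℝ] V →ₗ[ℝ] V) where
  carrier := {Γ | (∀ x y z : V, Γ x y z = Γ y x z) ∧
    (∀ x y z : V,
      Γ x y z + Γ x z y + Γ y x z + Γ y z x + Γ z x y + Γ z y x = 0)}
  add_mem' := by
    rintro a b ⟨ha1, ha2⟩ ⟨hb1, hb2⟩
    refine ⟨fun x y z => by simp [ha1 x y z, hb1 x y z], fun x y z => ?_⟩
    have h := congrArg₂ (· + ·) (ha2 x y z) (hb2 x y z)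
    simp only [add_zero] at h
    simp only [LinearMap.add_apply]
    rw [← h]; abel
  zero_mem' := by
    refine ⟨fun x y z => ?_, fun x y z => ?_⟩ <;> simp
  smul_mem' := by
    rintro c a ⟨ha1, ha2⟩
    refine ⟨fun x y z => by simp [ha1 x y z], fun x y z => ?_⟩
    simp only [LinearMap.smul_apply, ← smul_add]
    rw [ha2 x y z, smul_zero]

/-- `R(V)`: curvature-like tensors, i.e. trilinear maps `R : V³ → V` antisymmetric in
their first two arguments and satisfying the linear Bianchi identity. -/
def CurvLike : Submodule ℝ (V →ₗ[ℝ] V →ₗ[ℝ] V →ₗ[ℝ] V) where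
  carrier := {R | (∀ x y z : V, R x y z = - R y x z) ∧
    (∀ x y z : V, R x y z + R z x y + R y z x = 0)}
  add_mem' := by
    rintro a b ⟨ha1, ha2⟩ ⟨hb1, hb2⟩
    refine ⟨fun x y z => ?_, fun x y z => ?_⟩
    · simp only [LinearMap.add_apply]
      rw [ha1 x y z, hb1 x y z]; abel
    · have h := congrArg₂ (· + ·) (ha2 x y z) (hb2 x y z)
      simp only [add_zero] at h
      simp only [LinearMap.add_apply]
      rw [← h]; abel
  zero_mem' := by
    refine ⟨fun x y z => ?_, fun x y z => ?_⟩ <;> simp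
  smul_mem' := by
    rintro c a ⟨ha1, ha2⟩
    refine ⟨fun x y z => ?_, fun x y z => ?_⟩
    · simp only [LinearMap.smul_apply]
      rw [ha1 x y z, smul_neg]
    · simp only [LinearMap.smul_apply, ← smul_add]
      rw [ha2 x y z, smul_zero]


namespace CtildeAux

variable {V : Type*} [AddCommGroup V] [Module ℝ V]

noncomputable def phiAux (f : V →ₗ[ℝ] V →ₗ[ℝ] V →ₗ[ℝ] V) : V →ₗ[ℝ] V →ₗ[ℝ] V →ₗ[ℝ] V :=
  LinearMap.lflip (R₀ := ℝ) ((LinearMap.lflip (R₀ := ℝ)).toLinearMap ∘ₗ f) - (LinearMap.lflip (R₀ := ℝ)).toLinearMap ∘ₗ f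

noncomputable def psiAux (f : V →ₗ[ℝ] V →ₗ[ℝ] V →ₗ[ℝ] V) : V →ₗ[ℝ] V →ₗ[ℝ] V →ₗ[ℝ] V :=
  (3 : ℝ)⁻¹ • ((LinearMap.lflip (R₀ := ℝ)).toLinearMap ∘ₗ (LinearMap.lflip (R₀ := ℝ) f) +
    LinearMap.lflip (R₀ := ℝ) ((LinearMap.lflip (R₀ := ℝ)).toLinearMap ∘ₗ (LinearMap.lflip (R₀ := ℝ) f)))

@[simp] lemma phiAux_apply (f : V →ₗ[ℝ] V →ₗ[ℝ] V →ₗ[ℝ] V) (x y z : V) :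
    phiAux f x y z = f y z x - f x z y := by
  simp [phiAux, LinearMap.lflip_apply]

@[simp] lemma psiAux_apply (f : V →ₗ[ℝ] V →ₗ[ℝ] V →ₗ[ℝ] V) (x y z : V) :
    psiAux f x y z = (3 : ℝ)⁻¹ • (f z x y + f z y x) := by
  simp [psiAux, LinearMap.lflip_apply]

lemma phiAux_add (f g : V →ₗ[ℝ] V →ₗ[ℝ] V →ₗ[ℝ] V) :
    phiAux (f + g) = phiAux f + phiAux g := by
  ext x y z
  simp only [phiAux_apply, LinearMap.add_apply]
  abel

lemma phiAux_smul (c : ℝ) (f : V →ₗ[ℝ] V →ₗ[ℝ] V →ₗ[ℝ] V) :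
    phiAux (c • f) = c • phiAux f := by
  ext x y z
  simp only [phiAux_apply, LinearMap.smul_apply, smul_sub]

end CtildeAux

/-- The map `Φ(Γ)(x,y,z) = Γ(y,z,x) − Γ(x,z,y)` is a linear isomorphism from
`C̃_1(V)` onto the space `R(V)` of curvature-like tensors, with inverse
`R ↦ Γ`, `Γ(x,y,z) = (1/3)(R(z,x,y) + R(z,y,x))`. -/
theorem ctildeOne_equiv_curvLike
    (V : Type*) [AddCommGroup V] [Module ℝ V] [FiniteDimensional ℝ V] :
    ∃ e : CTildeOne V ≃ₗ[ℝ] CurvLike V,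
      (∀ (Γ : CTildeOne V) (x y z : V),
          (e Γ).1 x y z = Γ.1 y z x - Γ.1 x z y) ∧
      (∀ (R : CurvLike V) (x y z : V),
          (e.symm R).1 x y z = (3 : ℝ)⁻¹ • (R.1 z x y + R.1 z y x)) := by
  classical
  have memC : ∀ Γ : CTildeOne V, (∀ x y z : V, Γ.1 x y z = Γ.1 y x z) ∧
      (∀ x y z : V, Γ.1 x y z + Γ.1 x z y + Γ.1 y x z + Γ.1 y z x + Γ.1 z x y + Γ.1 z y x = 0) :=
    fun Γ => Γ.2
  have memR : ∀ R : CurvLike V, (∀ x y z : V, R.1 x y z = - R.1 y x z) ∧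
      (∀ x y z : V, R.1 x y z + R.1 z x y + R.1 y z x = 0) := fun R => R.2
  have hmemPhi : ∀ Γ : CTildeOne V, CtildeAux.phiAux Γ.1 ∈ CurvLike V := by
    intro Γ
    obtain ⟨h1, _⟩ := memC Γ
    refine ⟨fun x y z => ?_, fun x y z => ?_⟩
    · simp only [CtildeAux.phiAux_apply]; abel
    · simp only [CtildeAux.phiAux_apply]
      linear_combination (norm := module)
        (-1 : ℝ) • (h1 z y x) + (1 : ℝ) • (h1 z x y) + (-1 : ℝ) • (h1 y x z)
  have hmemPsi : ∀ R : CurvLike V, CtildeAux.psiAux R.1 ∈ CTildeOne V := by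
    intro R
    obtain ⟨a1, _⟩ := memR R
    refine ⟨fun x y z => ?_, fun x y z => ?_⟩
    · simp only [CtildeAux.psiAux_apply]
      rw [add_comm (R.1 z x y)]
    · simp only [CtildeAux.psiAux_apply]
      linear_combination (norm := module)
        ((2 : ℝ) * (3 : ℝ)⁻¹) • (a1 x y z) + ((2 : ℝ) * (3 : ℝ)⁻¹) • (a1 x z y) +
          ((2 : ℝ) * (3 : ℝ)⁻¹) • (a1 y z x)
  refine ⟨{ toFun := fun Γ => ⟨CtildeAux.phiAux Γ.1, hmemPhi Γ⟩
            map_add' := fun a b => Subtype.ext (CtildeAux.phiAux_add a.1 b.1)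
            map_smul' := fun c a => Subtype.ext (CtildeAux.phiAux_smul c a.1)
            invFun := fun R => ⟨CtildeAux.psiAux R.1, hmemPsi R⟩
            left_inv := ?_
            right_inv := ?_ }, ?_, ?_⟩
  · intro Γ
    obtain ⟨h1, h2⟩ := memC Γ
    refine Subtype.ext ?_
    ext x y z
    simp only [CtildeAux.psiAux_apply, CtildeAux.phiAux_apply]
    linear_combination (norm := module)
      (-(6 : ℝ)⁻¹) • (h1 z y x) + (-(6 : ℝ)⁻¹) • (h1 z x y) + ((2 : ℝ)⁻¹) • (h1 y x z) +
        (-(6 : ℝ)⁻¹) • (h2 x y z)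
  · intro R
    obtain ⟨a1, a2⟩ := memR R
    refine Subtype.ext ?_
    ext x y z
    simp only [CtildeAux.psiAux_apply, CtildeAux.phiAux_apply, smul_add]
    linear_combination (norm := module)
      (-(3 : ℝ)⁻¹) • (a1 x y z) + ((3 : ℝ)⁻¹) • (a1 x z y) + (-(3 : ℝ)⁻¹) • (a2 x y z)
  · intro Γ x y z
    simp [CtildeAux.phiAux_apply]
  · intro R x y z
    simp [CtildeAux.psiAux_apply]
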